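/- With π_i(f) = ∂_i((1+βx_i)f), where ∂_i(f) = (f − s_i·f)/(x_i − x_{i+1}), the operators π_i satisfy the braid relations: π_i π_j = π_j π_i whenever |i − j| > 1, and π_i π_{i+1} π_i = π_{i+1} π_i π_{i+1}. -/

import Mathlib

open MvPolynomial

set_option maxHeartbeats 1600000 in
/-- The β-isobaric divided difference operators π_i(f) = ∂_i((1+βx_i)f) satisfy
the braid relations: π_i π_j = π_j π_i for |i−j| > 1, and
π_i π_{i+1} π_i = π_{i+1} π_i π_{i+1}. -/
theorem stmt19 {R : Type*} [CommRing R] [IsDomain R] (β : R)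
    (d : ℕ → MvPolynomial ℕ R → MvPolynomial ℕ R)
    (hd : ∀ i f, (X i - X (i + 1)) * d i f =
      f - rename (⇑(Equiv.swap i (i + 1))) f)
    (p : ℕ → MvPolynomial ℕ R → MvPolynomial ℕ R)
    (hp : ∀ i f, p i f = d i ((1 + C β * X i) * f)) :
    (∀ i j : ℕ, (i + 1 < j ∨ j + 1 < i) → ∀ f, p i (p j f) = p j (p i f)) ∧
    (∀ i : ℕ, ∀ f, p i (p (i + 1) (p i f)) = p (i + 1) (p i (p (i + 1) f))) := by
  classical
  have hXne : ∀ a b : ℕ, a ≠ b → (X a - X b : MvPolynomial ℕ R) ≠ 0 := fun a b h =>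
    sub_ne_zero.mpr fun hc => h (X_injective hc)
  have hp' : ∀ (i : ℕ) (f : MvPolynomial ℕ R),
      (X i - X (i + 1)) * p i f
        = (1 + C β * X i) * f
          - (1 + C β * X (i + 1)) * rename (⇑(Equiv.swap i (i + 1))) f := by
    intro i f
    rw [hp, hd]
    congr 1
    rw [map_mul]
    congr 1
    simp [Equiv.swap_apply_left]
  have hL : ∀ (e : ℕ ≃ ℕ) (j : ℕ) (f : MvPolynomial ℕ R),
      (X (e j) - X (e (j + 1))) * rename (⇑e) (p j f)
        = (1 + C β * X (e j)) * rename (⇑e) f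
          - (1 + C β * X (e (j + 1)))
              * rename (⇑e) (rename (⇑(Equiv.swap j (j + 1))) f) := by
    intro e j f
    have h := congrArg (rename (⇑e)) (hp' j f)
    simp only [map_mul, map_sub, map_add, map_one, rename_C, rename_X] at h
    exact h
  constructor
  · intro i j hij f
    have hji : (Equiv.swap i (i + 1)) j = j :=
      Equiv.swap_apply_of_ne_of_ne (by omega) (by omega)
    have hji1 : (Equiv.swap i (i + 1)) (j + 1) = j + 1 :=
      Equiv.swap_apply_of_ne_of_ne (by omega) (by omega)
    have hij' : (Equiv.swap j (j + 1)) i = i :=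
      Equiv.swap_apply_of_ne_of_ne (by omega) (by omega)
    have hij1 : (Equiv.swap j (j + 1)) (i + 1) = i + 1 :=
      Equiv.swap_apply_of_ne_of_ne (by omega) (by omega)
    have f1 := hp' i (p j f)
    have f2 := hp' j f
    have f3 := hL (Equiv.swap i (i + 1)) j f
    rw [hji, hji1] at f3
    have f1' := hp' j (p i f)
    have f2' := hp' i f
    have f3' := hL (Equiv.swap j (j + 1)) i f
    rw [hij', hij1] at f3'
    have hcomm : rename (⇑(Equiv.swap j (j + 1))) (rename (⇑(Equiv.swap i (i + 1))) f)
        = rename (⇑(Equiv.swap i (i + 1))) (rename (⇑(Equiv.swap j (j + 1))) f) := by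
      rw [rename_rename, rename_rename]
      have hfun : (⇑(Equiv.swap i (i + 1)) ∘ ⇑(Equiv.swap j (j + 1)))
          = (⇑(Equiv.swap j (j + 1)) ∘ ⇑(Equiv.swap i (i + 1))) := by
        funext x
        simp only [Function.comp_apply, Equiv.swap_apply_def]
        split_ifs <;> omega
      rw [hfun]
    rw [hcomm] at f3'
    have key : (X i - X (i + 1)) * (X j - X (j + 1)) * p i (p j f)
        = (X i - X (i + 1)) * (X j - X (j + 1)) * p j (p i f) := by
      linear_combination (X j - X (j + 1)) * f1 + (1 + C β * X i) * f2
        - (1 + C β * X (i + 1)) * f3 - (X i - X (i + 1)) * f1'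
        - (1 + C β * X j) * f2' + (1 + C β * X (j + 1)) * f3'
    exact mul_left_cancel₀
      (mul_ne_zero (hXne _ _ (by omega)) (hXne _ _ (by omega))) key
  · intro i f
    set σ : ℕ ≃ ℕ := Equiv.swap i (i + 1) with hσdef
    set τ : ℕ ≃ ℕ := Equiv.swap (i + 1) (i + 1 + 1) with hτdef
    have hτi : τ i = i := Equiv.swap_apply_of_ne_of_ne (by omega) (by omega)
    have hτi1 : τ (i + 1) = i + 1 + 1 := Equiv.swap_apply_left _ _
    have hσi : σ i = i + 1 := Equiv.swap_apply_left _ _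
    have hσi1 : σ (i + 1) = i := Equiv.swap_apply_right _ _
    have hσi2 : σ (i + 1 + 1) = i + 1 + 1 :=
      Equiv.swap_apply_of_ne_of_ne (by omega) (by omega)
    have hτi2 : τ (i + 1 + 1) = i + 1 := Equiv.swap_apply_right _ _
    have hss : ∀ g : MvPolynomial ℕ R, rename (⇑σ) (rename (⇑σ) g) = g := by
      intro g
      rw [rename_rename]
      have : (⇑σ ∘ ⇑σ) = id := by funext x; simp [hσdef]
      rw [this, rename_id, AlgHom.id_apply]
    have htt : ∀ g : MvPolynomial ℕ R, rename (⇑τ) (rename (⇑τ) g) = g := by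
      intro g
      rw [rename_rename]
      have : (⇑τ ∘ ⇑τ) = id := by funext x; simp [hτdef]
      rw [this, rename_id, AlgHom.id_apply]
    have hbraid : rename (⇑σ) (rename (⇑τ) (rename (⇑σ) f))
        = rename (⇑τ) (rename (⇑σ) (rename (⇑τ) f)) := by
      rw [rename_rename, rename_rename, rename_rename, rename_rename]
      have hfun : ((⇑σ ∘ ⇑τ) ∘ ⇑σ) = ((⇑τ ∘ ⇑σ) ∘ ⇑τ) := by
        funext x
        simp only [Function.comp_apply, hσdef, hτdef, Equiv.swap_apply_def]
        split_ifs <;> omega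
      rw [hfun]
    -- L side equations
    have e1 := hp' i f
    have e2 := hp' (i + 1) (p i f)
    have e4 := hp' i (p (i + 1) (p i f))
    have e3 := hL τ i f
    rw [hτi, hτi1] at e3
    have e5 := hL σ (i + 1) (p i f)
    rw [hσi1, hσi2] at e5
    have e6 := hL σ i f
    rw [hσi, hσi1, hss] at e6
    have e7 := congrArg (rename (⇑σ)) e3
    simp only [map_mul, map_sub, map_add, map_one, rename_C, rename_X] at e7
    rw [hσi, hσi2, hbraid] at e7
    -- R side equations
    have e1' := hp' (i + 1) f
    have e2' := hp' i (p (i + 1) f)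
    have e4' := hp' (i + 1) (p i (p (i + 1) f))
    have e3' := hL σ (i + 1) f
    rw [hσi1, hσi2] at e3'
    have e5' := hL τ i (p (i + 1) f)
    rw [hτi, hτi1] at e5'
    have e6' := hL τ (i + 1) f
    rw [hτi1, hτi2, htt] at e6'
    have e7' := congrArg (rename (⇑τ)) e3'
    simp only [map_mul, map_sub, map_add, map_one, rename_C, rename_X] at e7'
    rw [hτi, hτi2] at e7'
    have key : (X i - X (i + 1)) * (X i - X (i + 1))
          * ((X (i + 1) - X (i + 1 + 1)) * (X (i + 1) - X (i + 1 + 1)))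
          * (X i - X (i + 1 + 1)) * p i (p (i + 1) (p i f))
        = (X i - X (i + 1)) * (X i - X (i + 1))
          * ((X (i + 1) - X (i + 1 + 1)) * (X (i + 1) - X (i + 1 + 1)))
          * (X i - X (i + 1 + 1)) * p (i + 1) (p i (p (i + 1) f)) := by
      linear_combination
        ((X i - X (i + 1)) * (X (i + 1) - X (i + 1 + 1)) * (X (i + 1) - X (i + 1 + 1))
          * (X i - X (i + 1 + 1))) * e4
        + ((1 + C β * X i) * (X i - X (i + 1)) * (X (i + 1) - X (i + 1 + 1))
          * (X i - X (i + 1 + 1))) * e2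
        - ((1 + C β * X (i + 1)) * (X i - X (i + 1)) * (X (i + 1) - X (i + 1 + 1))
          * (X (i + 1) - X (i + 1 + 1))) * e5
        + ((1 + C β * X i) * (1 + C β * X (i + 1)) * (X (i + 1) - X (i + 1 + 1))
          * (X i - X (i + 1 + 1))) * e1
        - ((1 + C β * X i) * (1 + C β * X (i + 1 + 1)) * (X i - X (i + 1))
          * (X (i + 1) - X (i + 1 + 1))) * e3
        + ((1 + C β * X i) * (1 + C β * X (i + 1)) * (X (i + 1) - X (i + 1 + 1))
          * (X (i + 1) - X (i + 1 + 1))) * e6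
        + ((1 + C β * X (i + 1)) * (1 + C β * X (i + 1 + 1)) * (X i - X (i + 1))
          * (X (i + 1) - X (i + 1 + 1))) * e7
        - ((X i - X (i + 1)) * (X i - X (i + 1)) * (X (i + 1) - X (i + 1 + 1))
          * (X i - X (i + 1 + 1))) * e4'
        - ((1 + C β * X (i + 1)) * (X i - X (i + 1)) * (X (i + 1) - X (i + 1 + 1))
          * (X i - X (i + 1 + 1))) * e2'
        + ((1 + C β * X (i + 1 + 1)) * (X i - X (i + 1)) * (X i - X (i + 1))
          * (X (i + 1) - X (i + 1 + 1))) * e5'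
        - ((1 + C β * X i) * (1 + C β * X (i + 1)) * (X i - X (i + 1))
          * (X i - X (i + 1 + 1))) * e1'
        + ((1 + C β * X (i + 1)) * (1 + C β * X (i + 1)) * (X i - X (i + 1))
          * (X (i + 1) - X (i + 1 + 1))) * e3'
        - ((1 + C β * X i) * (1 + C β * X (i + 1 + 1)) * (X i - X (i + 1))
          * (X i - X (i + 1))) * e6'
        - ((1 + C β * X (i + 1 + 1)) * (1 + C β * X (i + 1 + 1)) * (X i - X (i + 1))
          * (X (i + 1) - X (i + 1 + 1))) * e7'
    exact mul_left_cancel₀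
      (mul_ne_zero (mul_ne_zero
        (mul_ne_zero (hXne _ _ (by omega)) (hXne _ _ (by omega)))
        (mul_ne_zero (hXne _ _ (by omega)) (hXne _ _ (by omega))))
        (hXne _ _ (by omega))) key
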